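/- If p^d > (1−θ)·F_l, then in any PBE (σ*, β*), β*(l|H) ≤ 1−θ < p^d/F_l and hence σ^d*_H = 0 (assuming F_l > 0; if F_l = 0 the conclusion σ^d*_H = 0 also holds since the operator's payoff from inspection is −p^d·x). -/
import Mathlib


open Set

/-- Perfect Bayesian equilibrium of the two-server misbehavior-inspection signaling game.
The strategy profile is `(sh, sl, dH, dL)` (misbehavior rates of types `h` and `l`, and the
operator's inspection probabilities on servers `H` and `L`) and the belief assessment is
`(bhH, blH, bhL, blL)`. -/
def IsPBE (θ pth ptl pd Fh Fl : ℝ) (cH cL : ℝ → ℝ → ℝ)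
    (sh sl dH dL bhH blH bhL blL : ℝ) : Prop :=
  sh ∈ Icc (0:ℝ) 1 ∧ sl ∈ Icc (0:ℝ) 1 ∧ dH ∈ Icc (0:ℝ) 1 ∧ dL ∈ Icc (0:ℝ) 1 ∧
  bhH ∈ Icc (0:ℝ) 1 ∧ blH = 1 - bhH ∧ bhL ∈ Icc (0:ℝ) 1 ∧ blL = 1 - bhL ∧
  -- sequential rationality of type h agents
  (0 < sh → -(cL sh sl) - pth - Fh * dL ≥ -(cH sh sl)) ∧
  (sh < 1 → -(cL sh sl) - pth - Fh * dL ≤ -(cH sh sl)) ∧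
  -- sequential rationality of type l agents
  (0 < sl → -(cH sh sl) - ptl - Fl * dH ≥ -(cL sh sl)) ∧
  (sl < 1 → -(cH sh sl) - ptl - Fl * dH ≤ -(cL sh sl)) ∧
  -- operator optimality on servers H and L
  (∀ x ∈ Icc (0:ℝ) 1, (-pd + Fl * blH) * x ≤ (-pd + Fl * blH) * dH) ∧
  (∀ x ∈ Icc (0:ℝ) 1, (-pd + Fh * bhL) * x ≤ (-pd + Fh * bhL) * dL) ∧
  -- consistency of beliefs (Bayes' rule)
  (0 < θ * (1 - sh) + (1 - θ) * sl →
    bhH = θ * (1 - sh) / (θ * (1 - sh) + (1 - θ) * sl)) ∧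
  (0 < θ * sh + (1 - θ) * (1 - sl) →
    bhL = θ * sh / (θ * sh + (1 - θ) * (1 - sl)))

/-- If the inspection cost exceeds the maximal expected fine `(1-θ) * Fl`, then in any
PBE `β*(l|H) ≤ 1-θ < pd/Fl` (the latter when `Fl > 0`) and the operator never inspects
server H. -/
theorem high_inspection_cost_no_inspection
    (θ pth ptl pd Fh Fl : ℝ) (cH cL : ℝ → ℝ → ℝ)
    (hθ : θ ∈ Ioo (0:ℝ) 1) (hpth : 0 ≤ pth) (hptl : 0 < ptl)
    (hpd : 0 < pd) (hFh : 0 ≤ Fh) (hFl : 0 ≤ Fl)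
    (hA1 : cH 0 0 < cL 0 0 ∧ cL 0 1 < cH 0 1)
    (hA2Hh : ∀ y ∈ Icc (0:ℝ) 1, StrictAntiOn (fun x => cH x y) (Icc 0 1))
    (hA2Hl : ∀ x ∈ Icc (0:ℝ) 1, StrictMonoOn (fun y => cH x y) (Icc 0 1))
    (hA2Lh : ∀ y ∈ Icc (0:ℝ) 1, StrictMonoOn (fun x => cL x y) (Icc 0 1))
    (hA2Ll : ∀ x ∈ Icc (0:ℝ) 1, StrictAntiOn (fun y => cL x y) (Icc 0 1))
    (sh sl dH dL bhH blH bhL blL : ℝ)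
    (hPBE : IsPBE θ pth ptl pd Fh Fl cH cL sh sl dH dL bhH blH bhL blL)
    (hgt : (1 - θ) * Fl < pd) :
    blH ≤ 1 - θ ∧ (0 < Fl → 1 - θ < pd / Fl) ∧ dH = 0 := by
  obtain ⟨hsh, hsl, hdH, hdL, hbhH, hblH, hbhL, hblL,
    hSRh1, hSRh2, hSRl1, hSRl2, hOH, hOL, hBH, hBL⟩ := hPBE
  obtain ⟨hθ0, hθ1⟩ := hθ
  have h01 : (0:ℝ) ∈ Icc (0:ℝ) 1 := ⟨le_refl 0, zero_le_one⟩
  have h11 : (1:ℝ) ∈ Icc (0:ℝ) 1 := ⟨zero_le_one, le_refl 1⟩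
  -- not both misbehave
  have hsum : sh + sl ≤ 1 := by
    by_contra h
    push_neg at h
    have hshpos : 0 < sh := by nlinarith [hsl.2]
    have hslpos : 0 < sl := by nlinarith [hsh.2]
    have h1 := hSRh1 hshpos
    have h2 := hSRl1 hslpos
    nlinarith [mul_nonneg hFh hdL.1, mul_nonneg hFl hdH.1]
  -- denominator positive
  have hD : 0 < θ * (1 - sh) + (1 - θ) * sl := by
    rcases lt_or_eq_of_le hsh.2 with h | h
    · have : 0 < θ * (1 - sh) := mul_pos hθ0 (by linarith)
      nlinarith [mul_nonneg (le_of_lt (show (0:ℝ) < 1 - θ by linarith)) hsl.1]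
    · -- sh = 1, need sl > 0; otherwise contradiction with costs
      rcases lt_or_eq_of_le hsl.1 with h2 | h2
      · have : 0 < (1 - θ) * sl := mul_pos (by linarith) h2
        nlinarith [mul_nonneg (le_of_lt hθ0) (show (0:ℝ) ≤ 1 - sh by linarith [hsh.2])]
      · exfalso
        have hsh1 : sh = 1 := h
        have hsl0 : sl = 0 := h2.symm
        have h1 := hSRh1 (by rw [hsh1]; norm_num)
        rw [hsh1, hsl0] at h1
        have hc1 : cH 1 0 < cH 0 0 := hA2Hh 0 h01 h01 h11 zero_lt_one
        have hc2 : cL 0 0 < cL 1 0 := hA2Lh 0 h01 h01 h11 zero_lt_one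
        nlinarith [mul_nonneg hFh hdL.1, hA1.1]
  have hbhHval := hBH hD
  have hbhHge : θ ≤ bhH := by
    rw [hbhHval]
    rw [le_div_iff₀ hD]
    nlinarith [mul_pos hθ0 (show (0:ℝ) < 1 - θ by linarith), hsum]
  have hblHle : blH ≤ 1 - θ := by rw [hblH]; linarith
  refine ⟨hblHle, ?_, ?_⟩
  · intro hFlpos
    rw [lt_div_iff₀ hFlpos]
    linarith
  · -- coefficient negative
    have hcoef : -pd + Fl * blH < 0 := by
      have : Fl * blH ≤ Fl * (1 - θ) := mul_le_mul_of_nonneg_left hblHle hFl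
      nlinarith
    have h0 := hOH 0 h01
    simp at h0
    -- h0 : 0 ≤ (-pd + Fl * blH) * dH
    rcases lt_or_eq_of_le hdH.1 with h | h
    · exfalso
      have : (-pd + Fl * blH) * dH < 0 := mul_neg_of_neg_of_pos hcoef h
      nlinarith
    · exact h.symm
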